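/- arXiv:1404.3660 — 4 statements merged into one kernel-verified Lean document; each statement's English description precedes it below -/
import Mathlib

section
/- (Observation 1) Let (G, v0, c, d, W) be a CARP instance on the complete graph on a finite vertex set V. Every feasible solution (𝒞, s) for the instance (G, v0, c^▽, d, W) of c^▽-cost w is also a feasible solution for the instance (G, v0, c^▼, d, W), and its c^▼-cost is at most w − r. -/
noncomputable section

/-- Cost of a walk: sum of edge costs over its edge traversals,
counted with multiplicity. -/
def walkCost {V : Type*} {G : SimpleGraph V} (γ : Sym2 V → ℝ)
    {u v : V} (p : G.Walk u v) : ℝ :=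
  (p.edges.map γ).sum

/-- Minimum `c`-cost of a walk from `u` to `v` in `G`
(`graphDist G c u u = 0` via the trivial walk). -/
def graphDist {V : Type*} (G : SimpleGraph V) (c : Sym2 V → ℝ) (u v : V) : ℝ :=
  sInf {x : ℝ | ∃ p : G.Walk u v, walkCost c p = x}

/-- A feasible CARP solution on the complete graph on `V` with depot `v0`,
demand function `d` and capacity `W`: a finite family of closed walks, each
through the depot, together with a serving function assigning to each walk a
set of (positive-demand) edges it traverses, of total demand at most `W`,
such that every positive-demand edge is served by exactly one walk.
(Feasibility does not depend on the edge costs.) -/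
structure CARPSol (V : Type*) (v0 : V) (d : Sym2 V → ℝ) (W : ℝ) where
  n : ℕ
  walk : Fin n → (⊤ : SimpleGraph V).Walk v0 v0
  serve : Fin n → Finset (Sym2 V)
  serve_subset : ∀ i, ∀ e ∈ serve i, e ∈ (walk i).edges
  serve_pos : ∀ i, ∀ e ∈ serve i, 0 < d e
  serve_cap : ∀ i, ∑ e ∈ serve i, d e ≤ W
  serve_unique : ∀ e : Sym2 V, 0 < d e → ∃! i, e ∈ serve i

/-- Cost of a CARP solution with respect to an edge-cost function `γ`:
the sum over its walks of their traversal costs. -/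
def solCost {V : Type*} {v0 : V} {d : Sym2 V → ℝ} {W : ℝ}
    (γ : Sym2 V → ℝ) (sol : CARPSol V v0 d W) : ℝ :=
  ∑ i, walkCost γ (sol.walk i)

end

/-- Observation 1: any feasible solution to the instance with
costs `c▽` of cost `w` is also feasible for the instance with costs `c▼`
(feasibility does not depend on the costs) and has `c▼`-cost at most `w - r`,
where `R` is the set of positive-demand edges on which `c▽` and `c▼` differ
and `r = Σ_{e ∈ R} (c▽(e) - c▼(e))`. -/
theorem solCost_cBlackDown_le {V : Type*} [Fintype V] [DecidableEq V] (v0 : V)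
    (c d : Sym2 V → ℝ) (W : ℝ)
    (hc : ∀ e, 0 ≤ c e) (hd : ∀ e, 0 ≤ d e) (hW : 0 ≤ W)
    (cDn cBk : Sym2 V → ℝ)
    (hDn : ∀ u v : V, cDn s(u, v) =
      if 0 < d s(u, v) then c s(u, v) else graphDist (⊤ : SimpleGraph V) c u v)
    (hBk : ∀ u v : V, cBk s(u, v) = graphDist (⊤ : SimpleGraph V) c u v)
    (sol : CARPSol V v0 d W) (w : ℝ) (hw : solCost cDn sol = w) :
    solCost cBk sol ≤
      w - ∑ e ∈ Finset.univ.filter (fun e : Sym2 V => 0 < d e ∧ cDn e ≠ cBk e),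
        (cDn e - cBk e) := by
  classical
  set R : Finset (Sym2 V) :=
    Finset.univ.filter (fun e : Sym2 V => 0 < d e ∧ cDn e ≠ cBk e) with hRdef
  set f : Sym2 V → ℝ := fun e => cDn e - cBk e with hf
  -- graphDist is at most the cost of the single-edge walk
  have hdist_le : ∀ u v : V, u ≠ v → graphDist (⊤ : SimpleGraph V) c u v ≤ c s(u, v) := by
    intro u v huv
    apply csInf_le
    · refine ⟨0, ?_⟩
      rintro x ⟨p, rfl⟩
      apply List.sum_nonneg
      intro y hy
      obtain ⟨e, _, rfl⟩ := List.mem_map.mp hy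
      exact hc e
    · exact ⟨SimpleGraph.Walk.cons (by simp [huv]) SimpleGraph.Walk.nil,
        by simp [walkCost]⟩
  -- f is nonnegative on edges of walks
  have hfpos : ∀ i, ∀ e ∈ (sol.walk i).edges, 0 ≤ f e := by
    intro i e he
    induction e using Sym2.ind with
    | _ u v =>
      have huv : u ≠ v :=
        ((sol.walk i).adj_of_mem_edges he).ne
      simp only [hf, hDn, hBk]
      split_ifs with h
      · linarith [hdist_le u v huv]
      · simp
  -- per-walk bound
  have h1 : ∀ i, ∑ e ∈ R.filter (· ∈ sol.serve i), f e
      ≤ ((sol.walk i).edges.map f).sum := by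
    intro i
    rw [Finset.sum_list_map_count]
    have hsub : R.filter (· ∈ sol.serve i) ⊆ (sol.walk i).edges.toFinset := by
      intro e he
      rw [List.mem_toFinset]
      exact sol.serve_subset i e (Finset.mem_filter.mp he).2
    calc ∑ e ∈ R.filter (· ∈ sol.serve i), f e
        ≤ ∑ e ∈ (sol.walk i).edges.toFinset, f e := by
          apply Finset.sum_le_sum_of_subset_of_nonneg hsub
          intro e he _
          exact hfpos i e (List.mem_toFinset.mp he)
      _ ≤ ∑ e ∈ (sol.walk i).edges.toFinset, ((sol.walk i).edges.count e) • f e := by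
          apply Finset.sum_le_sum
          intro e he
          have hc1 : 1 ≤ (sol.walk i).edges.count e :=
            List.count_pos_iff.mpr (List.mem_toFinset.mp he)
          have hfe : 0 ≤ f e := hfpos i e (List.mem_toFinset.mp he)
          rw [nsmul_eq_mul]
          have : (1:ℝ) ≤ ((sol.walk i).edges.count e : ℝ) := by exact_mod_cast hc1
          nlinarith
  -- partition of R over the walks
  have h2 : ∑ e ∈ R, f e = ∑ i, ∑ e ∈ R.filter (· ∈ sol.serve i), f e := by
    simp only [Finset.sum_filter]
    rw [Finset.sum_comm]
    apply Finset.sum_congr rfl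
    intro e he
    have hde : 0 < d e := (Finset.mem_filter.mp he).2.1
    obtain ⟨i₀, hi₀, huniq⟩ := sol.serve_unique e hde
    rw [Finset.sum_eq_single i₀]
    · simp [hi₀]
    · intro j _ hj
      simp only [ite_eq_right_iff]
      intro hju
      exact absurd (huniq j hju) hj
    · simp
  -- rewrite solCost cBk
  have hlist : ∀ l : List (Sym2 V),
      (l.map cBk).sum = (l.map cDn).sum - (l.map f).sum := by
    intro l
    induction l with
    | nil => simp
    | cons a t ih => simp [ih, hf]; ring
  have hmain : solCost cBk sol = w - ∑ i, ((sol.walk i).edges.map f).sum := by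
    rw [← hw]
    simp only [solCost, walkCost, hlist, Finset.sum_sub_distrib]
  rw [hmain]
  have : ∑ e ∈ R, f e ≤ ∑ i, ((sol.walk i).edges.map f).sum := by
    rw [h2]
    exact Finset.sum_le_sum fun i _ => h1 i
  linarith
end

section
/- Let G = (V,E) be the complete graph on a finite vertex set with nonnegative edge costs c and demands d, and let C be a closed walk in G starting and ending at a vertex v0. Then there exists a closed walk C' in G starting and ending at v0 such that (a) every edge with positive demand is traversed by C' at least as many times as by C, and (b) the c-cost of C' equals the c^▽-cost of C. -/
section Aux

variable {V : Type*} [Fintype V] [DecidableEq V]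

lemma walkCost_nonneg {G : SimpleGraph V} (c : Sym2 V → ℝ) (hc : ∀ e, 0 ≤ c e)
    {u v : V} (p : G.Walk u v) : 0 ≤ walkCost c p := by
  apply List.sum_nonneg
  intro x hx
  obtain ⟨e, -, rfl⟩ := List.mem_map.mp hx
  exact hc e

lemma walkCost_bypass_le {G : SimpleGraph V} (c : Sym2 V → ℝ) (hc : ∀ e, 0 ≤ c e)
    {u v : V} (p : G.Walk u v) : walkCost c p.bypass ≤ walkCost c p := by
  have hsub : List.Subperm p.bypass.edges p.edges :=
    List.subperm_of_subset (p.bypass_isPath.edges_nodup) (p.edges_bypass_subset)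
  obtain ⟨l, hperm, hsl⟩ := hsub
  calc walkCost c p.bypass = (l.map c).sum := ((hperm.map c).sum_eq).symm
    _ ≤ (p.edges.map c).sum := by
        apply List.Sublist.sum_le_sum (hsl.map c)
        intro a ha
        obtain ⟨e, -, rfl⟩ := List.mem_map.mp ha
        exact hc e

/-- The graph distance in the complete graph is attained by some walk. -/
lemma exists_walk_graphDist (c : Sym2 V → ℝ) (hc : ∀ e, 0 ≤ c e) (u v : V) :
    ∃ p : (⊤ : SimpleGraph V).Walk u v,
      walkCost c p = graphDist (⊤ : SimpleGraph V) c u v := by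
  -- there is some walk from u to v
  have hne : Nonempty ((⊤ : SimpleGraph V).Walk u v) := by
    by_cases h : u = v
    · subst h; exact ⟨SimpleGraph.Walk.nil⟩
    · exact ⟨SimpleGraph.Walk.cons (by simpa using h) SimpleGraph.Walk.nil⟩
  -- minimum over paths
  have hpathne : Nonempty ((⊤ : SimpleGraph V).Path u v) := ⟨hne.some.toPath⟩
  obtain ⟨q, hq⟩ := Finset.exists_min_image Finset.univ
    (fun q : (⊤ : SimpleGraph V).Path u v => walkCost c q.1) ⟨hpathne.some, Finset.mem_univ _⟩
  refine ⟨q.1, ?_⟩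
  have hmem : walkCost c q.1 ∈ {x : ℝ | ∃ p : (⊤ : SimpleGraph V).Walk u v, walkCost c p = x} :=
    ⟨q.1, rfl⟩
  have hlb : ∀ x ∈ {x : ℝ | ∃ p : (⊤ : SimpleGraph V).Walk u v, walkCost c p = x},
      walkCost c q.1 ≤ x := by
    rintro x ⟨p, rfl⟩
    calc walkCost c q.1 ≤ walkCost c p.toPath.1 := hq.2 p.toPath (Finset.mem_univ _)
      _ ≤ walkCost c p := walkCost_bypass_le c hc p
  exact le_antisymm (le_csInf ⟨_, hmem⟩ hlb) (csInf_le ⟨walkCost c q.1, hlb⟩ hmem)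

lemma exists_walk_cost_cDown_aux (c d : Sym2 V → ℝ)
    (hc : ∀ e, 0 ≤ c e)
    (cDn : Sym2 V → ℝ)
    (hDn : ∀ u v : V, cDn s(u, v) =
      if 0 < d s(u, v) then c s(u, v) else graphDist (⊤ : SimpleGraph V) c u v)
    {u v0 : V} (C : (⊤ : SimpleGraph V).Walk u v0) :
    ∃ C' : (⊤ : SimpleGraph V).Walk u v0,
      (∀ e : Sym2 V, 0 < d e → C.edges.count e ≤ C'.edges.count e) ∧
      walkCost c C' = walkCost cDn C := by
  induction C with
  | nil => exact ⟨SimpleGraph.Walk.nil, by simp, by simp [walkCost]⟩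
  | @cons a b w h p ih =>
    obtain ⟨p', hcount, hcost⟩ := ih
    by_cases hpos : 0 < d s(a, b)
    · refine ⟨SimpleGraph.Walk.cons h p', ?_, ?_⟩
      · intro e he
        simp only [SimpleGraph.Walk.edges_cons, List.count_cons]
        have := hcount e he
        omega
      · show ((s(a,b) :: p'.edges).map c).sum = ((s(a,b) :: p.edges).map cDn).sum
        simp only [List.map_cons, List.sum_cons]
        rw [hDn a b, if_pos hpos]
        exact congrArg _ hcost
    · obtain ⟨q, hq⟩ := exists_walk_graphDist c hc a b
      refine ⟨q.append p', ?_, ?_⟩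
      · intro e he
        have hne : e ≠ s(a, b) := fun hEq => hpos (hEq ▸ he)
        simp only [SimpleGraph.Walk.edges_cons, SimpleGraph.Walk.edges_append,
          List.count_cons, List.count_append, beq_iff_eq, Ne.symm hne, ite_false]
        have := hcount e he
        omega
      · show (((q.append p').edges).map c).sum = ((s(a,b) :: p.edges).map cDn).sum
        rw [SimpleGraph.Walk.edges_append]
        simp only [List.map_cons, List.map_append, List.sum_cons, List.sum_append]
        rw [hDn a b, if_neg hpos]
        exact congrArg₂ (· + ·) hq hcost

end Aux

/-- for any closed walk `C` through `v0` in the complete graph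
there is a closed walk `C'` through `v0` that traverses every positive-demand
edge at least as often as `C` does and whose `c`-cost equals the `c▽`-cost
of `C`. -/
theorem exists_walk_cost_cDown {V : Type*} [Fintype V] [DecidableEq V]
    (v0 : V) (c d : Sym2 V → ℝ)
    (hc : ∀ e, 0 ≤ c e) (hd : ∀ e, 0 ≤ d e)
    (cDn : Sym2 V → ℝ)
    (hDn : ∀ u v : V, cDn s(u, v) =
      if 0 < d s(u, v) then c s(u, v) else graphDist (⊤ : SimpleGraph V) c u v)
    (C : (⊤ : SimpleGraph V).Walk v0 v0) :
    ∃ C' : (⊤ : SimpleGraph V).Walk v0 v0,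
      (∀ e : Sym2 V, 0 < d e → C.edges.count e ≤ C'.edges.count e) ∧
      walkCost c C' = walkCost cDn C := by
  exact exists_walk_cost_cDown_aux c d hc cDn hDn C
end

section
/- (Lemma 2) Let (G, v0, c, d, W) be a CARP instance on the complete graph on a finite vertex set V. Every feasible solution for (G, v0, c^▼, d, W) of c^▼-cost w can be transformed into a feasible solution (𝒞, s) for (G, v0, c^▼, d, W) of c^▼-cost at most w such that every edge in R is traversed by exactly one cycle C of 𝒞, is traversed by that cycle C exactly once, and is served by C. -/
namespace CARPAux

open SimpleGraph List

set_option linter.unusedSectionVars false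

section General
variable {W : Type*} {H : SimpleGraph W} (γ : Sym2 W → ℝ)

lemma walkCost_nil {u : W} : walkCost γ (SimpleGraph.Walk.nil : H.Walk u u) = 0 := by
  simp [walkCost]

lemma walkCost_cons {u v x : W} (h : H.Adj u v) (p : H.Walk v x) :
    walkCost γ (SimpleGraph.Walk.cons h p) = γ s(u, v) + walkCost γ p := by
  simp [walkCost, SimpleGraph.Walk.edges_cons]

lemma walkCost_append {u v x : W} (p : H.Walk u v) (q : H.Walk v x) :
    walkCost γ (p.append q) = walkCost γ p + walkCost γ q := by
  simp [walkCost, SimpleGraph.Walk.edges_append]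

lemma walkCost_reverse {u v : W} (p : H.Walk u v) : walkCost γ p.reverse = walkCost γ p := by
  simp [walkCost, SimpleGraph.Walk.edges_reverse, List.sum_reverse]

lemma walkCost_copy {u v u' v' : W} (p : H.Walk u v) (hu : u = u') (hv : v = v') :
    walkCost γ (p.copy hu hv) = walkCost γ p := by
  simp [walkCost, SimpleGraph.Walk.edges_copy]

lemma walkCost_nonneg {γ : Sym2 W → ℝ} (hγ : ∀ e, 0 ≤ γ e) {u v : W} (p : H.Walk u v) :
    0 ≤ walkCost γ p :=
  List.sum_nonneg (by rintro x hx; obtain ⟨e, -, rfl⟩ := List.mem_map.mp hx; exact hγ e)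

end General

variable {V : Type*} [Fintype V] [DecidableEq V]

lemma distSet_nonempty (c : Sym2 V → ℝ) (u v : V) :
    {x : ℝ | ∃ p : (⊤ : SimpleGraph V).Walk u v, walkCost c p = x}.Nonempty := by
  by_cases h : u = v
  · subst h; exact ⟨_, SimpleGraph.Walk.nil, rfl⟩
  · exact ⟨_, SimpleGraph.Walk.cons (by simp [h]) SimpleGraph.Walk.nil, rfl⟩

lemma distSet_bddBelow {c : Sym2 V → ℝ} (hc : ∀ e, 0 ≤ c e) (u v : V) :
    BddBelow {x : ℝ | ∃ p : (⊤ : SimpleGraph V).Walk u v, walkCost c p = x} :=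
  ⟨0, by rintro x ⟨p, rfl⟩; exact walkCost_nonneg hc p⟩

lemma graphDist_le {c : Sym2 V → ℝ} (hc : ∀ e, 0 ≤ c e) {u v : V}
    (p : (⊤ : SimpleGraph V).Walk u v) :
    graphDist (⊤ : SimpleGraph V) c u v ≤ walkCost c p :=
  csInf_le (distSet_bddBelow hc u v) ⟨p, rfl⟩

lemma graphDist_le_edge {c : Sym2 V → ℝ} (hc : ∀ e, 0 ≤ c e) {u v : V} (h : u ≠ v) :
    graphDist (⊤ : SimpleGraph V) c u v ≤ c s(u, v) := by
  have := graphDist_le hc (SimpleGraph.Walk.cons (by simp [h]) (SimpleGraph.Walk.nil) :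
    (⊤ : SimpleGraph V).Walk u v)
  rwa [walkCost_cons, walkCost_nil, add_zero] at this

lemma toFinset_sum_le {γ : Sym2 V → ℝ} (hγ : ∀ e, 0 ≤ γ e) (l : List (Sym2 V)) :
    ∑ e ∈ l.toFinset, γ e ≤ (l.map γ).sum := by
  induction l with
  | nil => simp
  | cons a l ih =>
    simp only [List.toFinset_cons, List.map_cons, List.sum_cons]
    by_cases ha : a ∈ l.toFinset
    · rw [Finset.insert_eq_self.mpr ha]; linarith [hγ a]
    · rw [Finset.sum_insert ha]; linarith

lemma sum_map_le_of_nodup_subset {γ : Sym2 V → ℝ} (hγ : ∀ e, 0 ≤ γ e)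
    {l l' : List (Sym2 V)} (hn : l.Nodup) (hs : l ⊆ l') :
    (l.map γ).sum ≤ (l'.map γ).sum := by
  calc (l.map γ).sum = ∑ e ∈ l.toFinset, γ e := by
        rw [List.sum_toFinset _ hn]
      _ ≤ ∑ e ∈ l'.toFinset, γ e := by
        apply Finset.sum_le_sum_of_subset_of_nonneg
        · intro e he; simpa using hs (by simpa using he)
        · intro e _ _; exact hγ e
      _ ≤ (l'.map γ).sum := toFinset_sum_le hγ l'

lemma exists_min_walk {c : Sym2 V → ℝ} (hc : ∀ e, 0 ≤ c e) (u v : V) :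
    ∃ p : (⊤ : SimpleGraph V).Walk u v,
      ∀ q : (⊤ : SimpleGraph V).Walk u v, walkCost c p ≤ walkCost c q := by
  have hne : Nonempty ((⊤ : SimpleGraph V).Path u v) := by
    obtain ⟨x, p, rfl⟩ := distSet_nonempty c u v
    exact ⟨⟨p.bypass, p.bypass_isPath⟩⟩
  obtain ⟨P0, -, hP0⟩ := Finset.exists_min_image
    (Finset.univ : Finset ((⊤ : SimpleGraph V).Path u v))
    (fun P => walkCost c P.val) (by simpa using Finset.univ_nonempty)
  refine ⟨P0.val, fun q => ?_⟩
  calc walkCost c P0.val ≤ walkCost c q.bypass :=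
        hP0 ⟨q.bypass, q.bypass_isPath⟩ (by simp)
    _ ≤ walkCost c q := sum_map_le_of_nodup_subset hc q.bypass_isPath.isTrail.edges_nodup
        q.edges_bypass_subset

lemma graphDist_eq_of_min {c : Sym2 V → ℝ} (hc : ∀ e, 0 ≤ c e) {u v : V}
    {p : (⊤ : SimpleGraph V).Walk u v}
    (hp : ∀ q : (⊤ : SimpleGraph V).Walk u v, walkCost c p ≤ walkCost c q) :
    graphDist (⊤ : SimpleGraph V) c u v = walkCost c p :=
  le_antisymm (graphDist_le hc p)
    (le_csInf (distSet_nonempty c u v) (by rintro x ⟨q, rfl⟩; exact hp q))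


section Subst

variable {W : Type*} [DecidableEq W] {H : SimpleGraph W}

/-- Replacement of a single edge traversal: if the traversed edge is `s(a,b)`,
use (a suitably oriented copy of) `P`, otherwise keep the edge. -/
def rep {a b : W} (P : H.Walk a b) {x y : W} (h : H.Adj x y) : H.Walk x y :=
  if h1 : x = a ∧ y = b then P.copy h1.1.symm h1.2.symm
  else if h2 : x = b ∧ y = a then P.reverse.copy h2.1.symm h2.2.symm
  else SimpleGraph.Walk.cons h SimpleGraph.Walk.nil

/-- Replace every traversal of `s(a,b)` in a walk by `P`. -/
def subst {a b : W} (P : H.Walk a b) : ∀ {x y : W}, H.Walk x y → H.Walk x y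
  | _, _, SimpleGraph.Walk.nil => SimpleGraph.Walk.nil
  | _, _, SimpleGraph.Walk.cons h p => (rep P h).append (subst P p)

lemma rep_of_ne {a b : W} (P : H.Walk a b) {x y : W} (h : H.Adj x y)
    (hne : s(x, y) ≠ s(a, b)) :
    rep P h = SimpleGraph.Walk.cons h SimpleGraph.Walk.nil := by
  rw [rep, dif_neg, dif_neg]
  · rintro ⟨rfl, rfl⟩; exact hne (Sym2.eq_swap)
  · rintro ⟨rfl, rfl⟩; exact hne rfl

lemma rep_count {a b : W} (P : H.Walk a b) {x y : W} (h : H.Adj x y)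
    (hxy : s(x, y) = s(a, b)) (f : Sym2 W) :
    (rep P h).edges.count f = P.edges.count f := by
  rw [Sym2.eq_iff] at hxy
  rw [rep]
  by_cases h1 : x = a ∧ y = b
  · rw [dif_pos h1, SimpleGraph.Walk.edges_copy]
  · have h2 : x = b ∧ y = a := by tauto
    rw [dif_neg h1, dif_pos h2, SimpleGraph.Walk.edges_copy,
      SimpleGraph.Walk.edges_reverse, List.count_reverse]

lemma rep_cost (γ : Sym2 W → ℝ) {a b : W} (P : H.Walk a b) {x y : W} (h : H.Adj x y)
    (hxy : s(x, y) = s(a, b)) :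
    walkCost γ (rep P h) = walkCost γ P := by
  rw [Sym2.eq_iff] at hxy
  rw [rep]
  by_cases h1 : x = a ∧ y = b
  · rw [dif_pos h1, walkCost_copy]
  · have h2 : x = b ∧ y = a := by tauto
    rw [dif_neg h1, dif_pos h2, walkCost_copy, walkCost_reverse]

lemma subst_cost {γ : Sym2 W → ℝ} {a b : W} {P : H.Walk a b}
    (hP : walkCost γ P ≤ γ s(a, b)) {x y : W} (p : H.Walk x y) :
    walkCost γ (subst P p) ≤ walkCost γ p := by
  induction p with
  | nil => rw [subst]
  | @cons x u y h p ih =>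
    rw [subst, walkCost_append, walkCost_cons]
    by_cases hxy : s(x, u) = s(a, b)
    · rw [rep_cost γ P h hxy]
      have : γ s(x, u) = γ s(a, b) := by rw [hxy]
      linarith
    · rw [rep_of_ne P h hxy, walkCost_cons, walkCost_nil]
      linarith

lemma subst_count {a b : W} {P : H.Walk a b} {f : Sym2 W} (hf : f ∉ P.edges)
    {x y : W} (p : H.Walk x y) :
    (subst P p).edges.count f = if f = s(a, b) then 0 else p.edges.count f := by
  have hPf : P.edges.count f = 0 := List.count_eq_zero.mpr hf
  induction p with
  | nil => simp [subst]
  | @cons x u y h p ih =>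
    rw [subst, SimpleGraph.Walk.edges_append, List.count_append, ih,
      SimpleGraph.Walk.edges_cons, List.count_cons]
    by_cases hxy : s(x, u) = s(a, b)
    · rw [rep_count P h hxy, hPf]
      by_cases hfe : f = s(a, b)
      · simp [hfe, hxy]
      · have this' : ¬ s(x, u) = f := by rw [hxy]; exact fun hh => hfe hh.symm
        simp [hfe, this']
    · rw [rep_of_ne P h hxy]
      by_cases hfe : f = s(a, b)
      · simp [hfe, List.count_cons, hxy]
      · simp only [if_neg hfe, List.count_cons, List.count_nil, SimpleGraph.Walk.edges_cons,
          SimpleGraph.Walk.edges_nil, List.count_cons, zero_add]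
        exact add_comm _ _

lemma subst_mem {a b : W} (P : H.Walk a b) {f : Sym2 W} (hfe : f ≠ s(a, b))
    {x y : W} {p : H.Walk x y} (hf : f ∈ p.edges) :
    f ∈ (subst P p).edges := by
  induction p with
  | nil => simp at hf
  | @cons x u y h p ih =>
    rw [SimpleGraph.Walk.edges_cons] at hf
    rw [subst, SimpleGraph.Walk.edges_append, List.mem_append]
    rcases List.mem_cons.mp hf with rfl | hf
    · left; rw [rep_of_ne P h hfe]; simp
    · right; exact ih hf

/-- Decompose a walk at an occurrence of an edge. -/
lemma exists_decomp {x y : W} (p : H.Walk x y) (e : Sym2 W) (he : e ∈ p.edges) :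
    ∃ (a b : W) (ha : H.Adj a b) (p₁ : H.Walk x a) (p₂ : H.Walk b y),
      p = p₁.append (SimpleGraph.Walk.cons ha p₂) ∧ s(a, b) = e := by
  induction p with
  | nil => simp at he
  | @cons x u y h p ih =>
    rw [SimpleGraph.Walk.edges_cons] at he
    rcases List.mem_cons.mp he with rfl | he
    · exact ⟨x, u, h, SimpleGraph.Walk.nil, p, by simp, rfl⟩
    · obtain ⟨a, b, ha, p₁, p₂, rfl, hs⟩ := ih he
      exact ⟨a, b, ha, SimpleGraph.Walk.cons h p₁, p₂, by simp, hs⟩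

end Subst


variable {V : Type*} [Fintype V] [DecidableEq V]

lemma exists_good_path {c : Sym2 V → ℝ} (hc : ∀ e, 0 ≤ c e) (cBk : Sym2 V → ℝ)
    (hBk : ∀ u v : V, cBk s(u, v) = graphDist (⊤ : SimpleGraph V) c u v)
    (S : Finset (Sym2 V))
    (hS : ∀ f ∈ S, ∀ x y : V, f = s(x, y) → graphDist (⊤ : SimpleGraph V) c x y < c f)
    (a b : V) :
    ∃ P : (⊤ : SimpleGraph V).Walk a b,
      walkCost cBk P ≤ cBk s(a, b) ∧ ∀ f ∈ S, f ∉ P.edges := by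
  obtain ⟨p0, hp0⟩ := exists_min_walk hc a b
  refine ⟨p0, ?_, ?_⟩
  · have hpoint : ∀ f ∈ p0.edges, cBk f ≤ c f := by
      intro f
      refine Sym2.ind (fun x y hf => ?_) f
      have hadj : (⊤ : SimpleGraph V).Adj x y := p0.adj_of_mem_edges hf
      rw [hBk x y]
      exact graphDist_le_edge hc hadj.ne
    calc walkCost cBk p0 ≤ walkCost c p0 := List.sum_le_sum hpoint
      _ = cBk s(a, b) := by rw [hBk a b, graphDist_eq_of_min hc hp0]
  · intro f hf hfP
    obtain ⟨a', b', ha', p₁, p₂, hdec, hs⟩ := exists_decomp p0 f hfP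
    have hlt : graphDist (⊤ : SimpleGraph V) c a' b' < c f := hS f hf a' b' hs.symm
    obtain ⟨x, ⟨q, rfl⟩, hq⟩ := exists_lt_of_csInf_lt (distSet_nonempty c a' b') hlt
    have hle := hp0 (p₁.append (q.append p₂))
    rw [hdec, walkCost_append, walkCost_cons, walkCost_append, walkCost_append, hs] at hle
    linarith

lemma step {v0 : V} {d : Sym2 V → ℝ} {Wc : ℝ} (γ : Sym2 V → ℝ)
    (sol : CARPSol V v0 d Wc) {e : Sym2 V} {a b : V} (heab : e = s(a, b))
    (hde : 0 < d e)
    (S : Finset (Sym2 V)) (heS : e ∈ S)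
    (P : (⊤ : SimpleGraph V).Walk a b)
    (hPcost : walkCost γ P ≤ γ e)
    (hPS : ∀ f ∈ S, f ∉ P.edges) :
    ∃ walk' : Fin sol.n → (⊤ : SimpleGraph V).Walk v0 v0,
      (∀ i, walkCost γ (walk' i) ≤ walkCost γ (sol.walk i)) ∧
      (∀ i, ∀ f ∈ sol.serve i, f ∈ (walk' i).edges) ∧
      (∀ f ∈ S, f ≠ e → ∀ j, (walk' j).edges.count f = (sol.walk j).edges.count f) ∧
      (∃ i, e ∈ sol.serve i ∧ (walk' i).edges.count e = 1 ∧
        ∀ j, e ∈ (walk' j).edges → j = i) := by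
  obtain ⟨i₀, hi₀, hiu⟩ := sol.serve_unique e hde
  have he_mem : e ∈ (sol.walk i₀).edges := sol.serve_subset i₀ e hi₀
  obtain ⟨a', b', ha', p₁, p₂, hdec, hs⟩ := exists_decomp (sol.walk i₀) e he_mem
  have hePnot : e ∉ P.edges := hPS e heS
  have hePab : s(a, b) ∉ P.edges := heab ▸ hePnot
  have hPc : walkCost γ P ≤ γ s(a, b) := heab ▸ hPcost
  set W0 : (⊤ : SimpleGraph V).Walk v0 v0 :=
    (subst P p₁).append (SimpleGraph.Walk.cons ha' (subst P p₂)) with hW0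
  have hW0edges : W0.edges = (subst P p₁).edges ++ (s(a', b') :: (subst P p₂).edges) := by
    rw [hW0, SimpleGraph.Walk.edges_append, SimpleGraph.Walk.edges_cons]
  refine ⟨fun j => if j = i₀ then W0 else subst P (sol.walk j), ?_, ?_, ?_, ?_⟩
  · intro i
    by_cases hi : i = i₀
    · subst hi
      beta_reduce
      rw [if_pos rfl, hdec, hW0, walkCost_append, walkCost_append, walkCost_cons,
        walkCost_cons]
      have h1 := subst_cost hPc p₁
      have h2 := subst_cost hPc p₂
      linarith
    · beta_reduce
      rw [if_neg hi]; exact subst_cost hPc _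
  · intro i f hf
    by_cases hi : i = i₀
    · subst hi
      beta_reduce
      rw [if_pos rfl]
      by_cases hfe : f = e
      · subst hfe
        rw [hW0edges]
        exact List.mem_append_right _ (by rw [hs]; exact List.mem_cons_self)
      · have hfab : f ≠ s(a, b) := fun hh => hfe (heab ▸ hh)
        have hfmem : f ∈ (sol.walk i).edges := sol.serve_subset i f hf
        rw [hdec, SimpleGraph.Walk.edges_append, SimpleGraph.Walk.edges_cons] at hfmem
        rw [hW0edges]
        rcases List.mem_append.mp hfmem with h1 | h1
        · exact List.mem_append_left _ (subst_mem P hfab h1)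
        · rcases List.mem_cons.mp h1 with h2 | h2
          · exact absurd (h2.trans hs) hfe
          · exact List.mem_append_right _ (List.mem_cons_of_mem _ (subst_mem P hfab h2))
    · beta_reduce
      rw [if_neg hi]
      have hfe : f ≠ e := fun hh => hi (hiu i (hh ▸ hf))
      have hfab : f ≠ s(a, b) := fun hh => hfe (heab ▸ hh)
      exact subst_mem P hfab (sol.serve_subset i f hf)
  · intro f hfS hfe j
    have hfP : f ∉ P.edges := hPS f hfS
    have hfab : ¬ f = s(a, b) := fun hh => hfe (heab ▸ hh)
    by_cases hj : j = i₀
    · subst hj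
      beta_reduce
      rw [if_pos rfl, hW0edges, hdec, SimpleGraph.Walk.edges_append,
        SimpleGraph.Walk.edges_cons, List.count_append, List.count_append,
        List.count_cons, List.count_cons, subst_count hfP, subst_count hfP, if_neg hfab,
        if_neg hfab]
    · beta_reduce
      rw [if_neg hj, subst_count hfP, if_neg hfab]
  · refine ⟨i₀, hi₀, ?_, ?_⟩
    · beta_reduce
      rw [if_pos rfl, hW0edges, List.count_append, List.count_cons,
        subst_count hePnot, subst_count hePnot, if_pos heab]
      simp [hs, heab]
    · intro j hj
      by_contra hne
      beta_reduce at hj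
      rw [if_neg hne] at hj
      have := subst_count hePnot (sol.walk j)
      rw [if_pos heab] at this
      rw [← List.count_pos_iff, this] at hj
      exact absurd hj (lt_irrefl 0)


lemma sym2_repr {α : Type*} (z : Sym2 α) : ∃ a b : α, z = s(a, b) :=
  Sym2.ind (fun a b => ⟨a, b, rfl⟩) z

end CARPAux

open CARPAux in
/-- Lemma 2: every feasible solution for the instance with
costs `c▼`, of `c▼`-cost `w`, can be transformed into a feasible solution of
`c▼`-cost at most `w` in which every edge of
`R = {e : d(e) > 0 and c▽(e) ≠ c▼(e)}` is traversed by exactly one cycle,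
is traversed by that cycle exactly once, and is served by that cycle. -/
theorem exists_solution_R_once {V : Type*} [Fintype V] [DecidableEq V]
    (v0 : V) (c d : Sym2 V → ℝ) (W : ℝ)
    (hc : ∀ e, 0 ≤ c e) (hd : ∀ e, 0 ≤ d e) (hW : 0 ≤ W)
    (cDn cBk : Sym2 V → ℝ)
    (hDn : ∀ u v : V, cDn s(u, v) =
      if 0 < d s(u, v) then c s(u, v) else graphDist (⊤ : SimpleGraph V) c u v)
    (hBk : ∀ u v : V, cBk s(u, v) = graphDist (⊤ : SimpleGraph V) c u v)
    (sol : CARPSol V v0 d W) (w : ℝ) (hw : solCost cBk sol = w) :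
    ∃ sol' : CARPSol V v0 d W,
      solCost cBk sol' ≤ w ∧
      ∀ e ∈ Finset.univ.filter (fun e : Sym2 V => 0 < d e ∧ cDn e ≠ cBk e),
        ∃ i : Fin sol'.n,
          e ∈ sol'.serve i ∧
          (sol'.walk i).edges.count e = 1 ∧
          ∀ j : Fin sol'.n, e ∈ (sol'.walk j).edges → j = i := by
  classical
  have hnondiag : ∀ f : Sym2 V, 0 < d f → ¬ f.IsDiag := by
    intro f hf hdiag
    obtain ⟨i, hi, -⟩ := sol.serve_unique f hf
    exact (⊤ : SimpleGraph V).not_isDiag_of_mem_edgeSet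
      ((sol.walk i).edges_subset_edgeSet (sol.serve_subset i f hi)) hdiag
  set S : Finset (Sym2 V) :=
    Finset.univ.filter (fun e : Sym2 V => 0 < d e ∧ cDn e ≠ cBk e) with hSdef
  have hmemS : ∀ f : Sym2 V, f ∈ S ↔ (0 < d f ∧ cDn f ≠ cBk f) := by
    intro f
    rw [hSdef, Finset.mem_filter]
    simp
  have hSlt : ∀ f ∈ S, ∀ x y : V, f = s(x, y) →
      graphDist (⊤ : SimpleGraph V) c x y < c f := by
    intro f hfS x y hfxy
    obtain ⟨hdf, hne⟩ := (hmemS f).mp hfS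
    subst hfxy
    have hxy : x ≠ y := fun h => hnondiag _ hdf (Sym2.mk_isDiag_iff.mpr h)
    rw [hDn x y, if_pos hdf, hBk x y] at hne
    exact lt_of_le_of_ne (graphDist_le_edge hc hxy) (Ne.symm hne)
  have key : ∀ T : Finset (Sym2 V), T ⊆ S → ∃ sol' : CARPSol V v0 d W,
      solCost cBk sol' ≤ w ∧ ∀ e ∈ T, ∃ i : Fin sol'.n, e ∈ sol'.serve i ∧
        (sol'.walk i).edges.count e = 1 ∧
        ∀ j : Fin sol'.n, e ∈ (sol'.walk j).edges → j = i := by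
    intro T
    induction T using Finset.induction_on with
    | empty => exact fun _ => ⟨sol, le_of_eq hw, by simp⟩
    | @insert e T hnotmem ih =>
      intro hsub
      have heS : e ∈ S := hsub (Finset.mem_insert_self e T)
      obtain ⟨sol₁, hcost₁, hQ₁⟩ := ih (fun f hf => hsub (Finset.mem_insert_of_mem hf))
      have hde : 0 < d e := ((hmemS e).mp heS).1
      obtain ⟨a, b, heab⟩ := sym2_repr e
      obtain ⟨P, hPcost, hPS⟩ := exists_good_path hc cBk hBk S hSlt a b
      have hPcost' : walkCost cBk P ≤ cBk e := by rw [heab]; exact hPcost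
      obtain ⟨walk', hw1, hw2, hw3, i₁, hi₁, hcount, huniq⟩ :=
        step cBk sol₁ heab hde S heS P hPcost' hPS
      refine ⟨⟨sol₁.n, walk', sol₁.serve, hw2, sol₁.serve_pos, sol₁.serve_cap,
        sol₁.serve_unique⟩, ?_, ?_⟩
      · calc ∑ i, walkCost cBk (walk' i)
            ≤ ∑ i, walkCost cBk (sol₁.walk i) := Finset.sum_le_sum (fun i _ => hw1 i)
          _ ≤ w := hcost₁
      · intro f hf
        rcases Finset.mem_insert.mp hf with rfl | hfT
        · exact ⟨i₁, hi₁, hcount, huniq⟩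
        · obtain ⟨i, h1, h2, h3⟩ := hQ₁ f hfT
          have hfS : f ∈ S := hsub (Finset.mem_insert_of_mem hfT)
          have hfe : f ≠ e := fun h => hnotmem (h ▸ hfT)
          refine ⟨i, h1, ?_, ?_⟩
          · rw [hw3 f hfS hfe i]; exact h2
          · intro j hj
            apply h3 j
            rw [← List.count_pos_iff] at hj ⊢
            rwa [hw3 f hfS hfe j] at hj
  obtain ⟨sol', h1, h2⟩ := key S subset_rfl
  refine ⟨sol', h1, fun e he => h2 e ?_⟩
  rw [hmemS e]
  rw [Finset.mem_filter] at he
  exact he.2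
end

section
/- Let ℓ ≥ 0 and consider the CARP instance with vertex set {1, 1', 2, 2', 3, 3', 4, 4'}, depot vertex 1, capacity W = 4, edges {i, i'} for i ∈ {1,2,3,4} of cost 0 and demand 1, edges between every copy of i and every copy of j of cost 1 and demand 0 for each pair {i,j} ∈ {{1,4}, {3,4}, {2,3}}, and edges between every copy of i and every copy of j of cost ℓ and demand 0 for each pair {i,j} ∈ {{1,2}, {1,3}, {2,4}} (a copy of i means i or i'). This instance admits a feasible solution consisting of a single closed walk through the depot of total cost 6, serving all four positive-demand edges; in particular the optimal cost of this CARP instance is at most 6, independently of ℓ. -/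
noncomputable section

/-- Vertex set of the split-vertex instance: two copies `(i,0)` and `(i,1)`
of each TSP vertex `i ∈ {1,2,3,4}` (represented by `Fin 4`). -/
abbrev SplitV : Type := Fin 4 × Fin 2

/-- Demands of the split-vertex instance: the split edges `{(i,0),(i,1)}`
have demand `1`, all other edges have demand `0`. -/
def dSplit : Sym2 SplitV → ℝ :=
  fun e => if ∃ i : Fin 4, e = s((i, 0), (i, 1)) then 1 else 0

/-- Costs of the split-vertex instance (for the TSP costs of Statement 11,
with TSP vertices `1,2,3,4` represented by `0,1,2,3 : Fin 4`): split edges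
`{(i,a),(i,b)}` cost `0`; edges between copies of `i` and `j` cost `1` for
`{i,j} ∈ {{1,4},{3,4},{2,3}}` and cost `ℓ` for
`{i,j} ∈ {{1,2},{1,3},{2,4}}`. -/
def cSplit (ℓ : ℝ) : Sym2 SplitV → ℝ :=
  fun e =>
    if ∃ (i : Fin 4) (a b : Fin 2), e = s((i, a), (i, b)) then 0
    else if ∃ a b : Fin 2,
        e = s(((0 : Fin 4), a), ((3 : Fin 4), b)) ∨
        e = s(((2 : Fin 4), a), ((3 : Fin 4), b)) ∨
        e = s(((1 : Fin 4), a), ((2 : Fin 4), b)) then 1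
    else ℓ

end


noncomputable section

private def vtx12 (i : Fin 4) (a : Fin 2) : SplitV := (i, a)

private def adjT12 {a b : SplitV} (h : a ≠ b) : (⊤ : SimpleGraph SplitV).Adj a b := h

private def myWalk12 : (⊤ : SimpleGraph SplitV).Walk (vtx12 0 0) (vtx12 0 0) :=
  .cons (adjT12 (by decide : vtx12 0 0 ≠ vtx12 0 1)) <|
  .cons (adjT12 (by decide : vtx12 0 1 ≠ vtx12 3 0)) <|
  .cons (adjT12 (by decide : vtx12 3 0 ≠ vtx12 3 1)) <|
  .cons (adjT12 (by decide : vtx12 3 1 ≠ vtx12 2 0)) <|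
  .cons (adjT12 (by decide : vtx12 2 0 ≠ vtx12 2 1)) <|
  .cons (adjT12 (by decide : vtx12 2 1 ≠ vtx12 1 0)) <|
  .cons (adjT12 (by decide : vtx12 1 0 ≠ vtx12 1 1)) <|
  .cons (adjT12 (by decide : vtx12 1 1 ≠ vtx12 2 0)) <|
  .cons (adjT12 (by decide : vtx12 2 0 ≠ vtx12 3 0)) <|
  .cons (adjT12 (by decide : vtx12 3 0 ≠ vtx12 0 0)) .nil

private def serve12 : Finset (Sym2 SplitV) :=
  {s(vtx12 0 0, vtx12 0 1), s(vtx12 1 0, vtx12 1 1),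
   s(vtx12 2 0, vtx12 2 1), s(vtx12 3 0, vtx12 3 1)}

private lemma cSplit_nonneg (ℓ : ℝ) (hℓ : 0 ≤ ℓ) (e : Sym2 SplitV) : 0 ≤ cSplit ℓ e := by
  unfold cSplit
  split
  · exact le_refl 0
  · split
    · exact zero_le_one
    · exact hℓ

private def mySol12 : CARPSol SplitV ((0 : Fin 4), (0 : Fin 2)) dSplit 4 where
  n := 1
  walk := fun _ => myWalk12
  serve := fun _ => serve12
  serve_subset := by
    intro i e he
    fin_cases he <;> simp +decide [myWalk12, vtx12]
  serve_pos := by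
    intro i e he
    fin_cases he <;> simp +decide [dSplit, vtx12]
  serve_cap := by
    intro i
    show ∑ e ∈ serve12, dSplit e ≤ 4
    rw [show serve12 = {s(vtx12 0 0, vtx12 0 1), s(vtx12 1 0, vtx12 1 1),
      s(vtx12 2 0, vtx12 2 1), s(vtx12 3 0, vtx12 3 1)} from rfl]
    rw [Finset.sum_insert (by decide), Finset.sum_insert (by decide),
      Finset.sum_insert (by decide), Finset.sum_singleton]
    simp +decide [dSplit, vtx12]
    norm_num
  serve_unique := by
    intro e he
    refine ⟨0, ?_, fun j _ => Subsingleton.elim j 0⟩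
    by_contra h
    have : dSplit e = 0 := by
      unfold dSplit
      rw [if_neg]
      rintro ⟨i, rfl⟩
      apply h
      show s((i, 0), (i, 1)) ∈ serve12
      fin_cases i <;> decide
    simp [this] at he

private lemma mySol12_cost (ℓ : ℝ) : solCost (cSplit ℓ) mySol12 = 6 := by
  show ∑ _i : Fin 1, walkCost (cSplit ℓ) myWalk12 = 6
  rw [Finset.sum_const, Finset.card_univ]
  simp only [Fintype.card_fin, one_smul]
  show ((myWalk12.edges).map (cSplit ℓ)).sum = 6
  simp only [myWalk12, SimpleGraph.Walk.edges_cons, SimpleGraph.Walk.edges_nil]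
  simp +decide [myWalk12, cSplit, vtx12]
  norm_num

end

/-- for every `ℓ ≥ 0`, the split-vertex CARP instance with
depot `(1,0)` (represented by `(0,0)`) and capacity `W = 4` admits a feasible
solution consisting of a single closed walk through the depot of total cost
`6`; in particular its optimal cost is at most `6`, independently of `ℓ`. -/
theorem split_instance_cost_six (ℓ : ℝ) (hℓ : 0 ≤ ℓ) :
    (∃ sol : CARPSol SplitV ((0 : Fin 4), (0 : Fin 2)) dSplit 4,
      sol.n = 1 ∧ solCost (cSplit ℓ) sol = 6) ∧
    sInf {x : ℝ | ∃ sol : CARPSol SplitV ((0 : Fin 4), (0 : Fin 2)) dSplit 4,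
      solCost (cSplit ℓ) sol = x} ≤ 6 := by
  constructor
  · exact ⟨mySol12, rfl, mySol12_cost ℓ⟩
  · apply csInf_le
    · refine ⟨0, ?_⟩
      rintro x ⟨sol, rfl⟩
      apply Finset.sum_nonneg
      intro i _
      apply List.sum_nonneg
      intro x hx
      obtain ⟨e, _, rfl⟩ := List.mem_map.mp hx
      exact cSplit_nonneg ℓ hℓ e
    · exact ⟨mySol12, mySol12_cost ℓ⟩
end
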